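/- If F : C → C and F' : C → C both admit precise factorizations w.r.t. a class S of objects, then the composite functor F ∘ F' (X ↦ F(F' X)) admits precise factorizations w.r.t. S. -/
import Mathlib


open CategoryTheory CategoryTheory.Limits

universe v u

variable {C : Type u} [Category.{v} C]

/-- A morphism `s : S ⟶ G.obj R` is `G`-precise if whenever `G h ∘ f = G g ∘ s`
there is a diagonal `d : R ⟶ A` with `G d ∘ s = f` and `h ∘ d = g`. -/
def Precise (G : C ⥤ C) {S R : C} (s : S ⟶ G.obj R) : Prop :=
  ∀ {A D : C} (f : S ⟶ G.obj A) (g : R ⟶ D) (h : A ⟶ D),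
    f ≫ G.map h = s ≫ G.map g → ∃ d : R ⟶ A, s ≫ G.map d = f ∧ d ≫ h = g

/-- `G` admits precise factorizations w.r.t. a class `S` of objects. -/
def AdmitsPreciseFact (G : C ⥤ C) (S : Set C) : Prop :=
  ∀ {X Y : C} (f : X ⟶ G.obj Y), X ∈ S →
    ∃ (Y' : C) (h : Y' ⟶ Y) (f' : X ⟶ G.obj Y'),
      Y' ∈ S ∧ Precise G f' ∧ f' ≫ G.map h = f

/-- If `F` and `F'` admit precise factorizations w.r.t. `S`, then so does the
composite functor `X ↦ F (F' X)` (which is `F' ⋙ F` in Mathlib's notation). -/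
theorem admitsPreciseFact_comp (F F' : C ⥤ C) (S : Set C)
    (hiso : ∀ {X Y : C}, X ∈ S → (X ≅ Y) → Y ∈ S)
    (hF : AdmitsPreciseFact F S) (hF' : AdmitsPreciseFact F' S) :
    AdmitsPreciseFact (F' ⋙ F) S := by
  intro X Y f hX
  obtain ⟨Z, h₁, f₁, hZ, hp₁, hfac₁⟩ := hF (f : X ⟶ F.obj (F'.obj Y)) hX
  obtain ⟨Y', h₂, h₁', hY', hp₂, hfac₂⟩ := hF' h₁ hZ
  refine ⟨Y', h₂, f₁ ≫ F.map h₁', hY', ?_, ?_⟩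
  · intro A D g₀ g h hcomm
    obtain ⟨d₁, hd₁, hd₁'⟩ := hp₁ g₀ (h₁' ≫ F'.map g) (F'.map h)
      (by simpa [Functor.map_comp] using hcomm)
    obtain ⟨d, hd, hd'⟩ := hp₂ d₁ g h hd₁'
    refine ⟨d, ?_, hd'⟩
    show (f₁ ≫ F.map h₁') ≫ F.map (F'.map d) = g₀
    rw [Category.assoc, ← F.map_comp, hd, hd₁]
  · show (f₁ ≫ F.map h₁') ≫ F.map (F'.map h₂) = f
    rw [Category.assoc, ← F.map_comp, hfac₂, hfac₁]
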